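/- Let A ∈ ℚ^{m×n} and b ∈ ℚ^m. If there exists x ∈ ℝ^n with A x ≤ b componentwise, then there exists q ∈ ℚ^n with A q ≤ b componentwise. -/

import Mathlib

/-- Every satisfiable system of linear constraints with rational coefficients has a
rational-valued solution. -/
theorem rational_solution_of_real_solution {m n : ℕ} (A : Matrix (Fin m) (Fin n) ℚ)
    (b : Fin m → ℚ)
    (h : ∃ x : Fin n → ℝ, ∀ i, ∑ k, (A i k : ℝ) * x k ≤ (b i : ℝ)) :
    ∃ q : Fin n → ℚ, ∀ i, ∑ k, A i k * q k ≤ b i := by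
  classical
  obtain ⟨x, hx⟩ := h
  -- a ℚ-basis of ℝ containing 1
  have hind : LinearIndepOn ℚ id ({1} : Set ℝ) :=
    (linearIndepOn_singleton_iff ℚ).mpr one_ne_zero
  set ι := hind.extend (Set.subset_univ _) with hιdef
  let B : Module.Basis ι ℚ ℝ := Module.Basis.extend hind
  have hBself : ∀ t, B t = (t : ℝ) := fun t => Module.Basis.extend_apply_self hind t
  have h1mem : (1 : ℝ) ∈ ι := hind.subset_extend _ rfl
  let i₀ : ι := ⟨1, h1mem⟩
  let c : Fin n → (ι →₀ ℚ) := fun k => B.repr (x k)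
  let T : Finset ι := (Finset.univ.biUnion fun k => (c k).support).erase i₀
  have hi₀T : i₀ ∉ T := Finset.notMem_erase _ _
  have hsupp : ∀ k, (c k).support ⊆ insert i₀ T := by
    intro k t ht
    by_cases h0 : t = i₀
    · simp [h0]
    · refine Finset.mem_insert_of_mem (Finset.mem_erase.mpr ⟨h0, ?_⟩)
      exact Finset.mem_biUnion.mpr ⟨k, Finset.mem_univ _, ht⟩
  -- expansion of x k
  have hx_expand : ∀ k, x k = (c k i₀ : ℝ) + ∑ t ∈ T, (c k t : ℝ) * (t : ℝ) := by
    intro k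
    conv_lhs => rw [← B.linearCombination_repr (x k)]
    rw [Finsupp.linearCombination_apply, Finsupp.sum]
    rw [Finset.sum_subset (hsupp k) (by intro t _ hts; have h0 : (B.repr (x k)) t = 0 := Finsupp.notMem_support_iff.mp hts; simp [h0])]
    rw [Finset.sum_insert hi₀T]
    simp only [hBself, Rat.smul_def]
    simp [i₀, c]
  -- the rational identities forced by tight constraints
  have key : ∀ i : Fin m, ∑ k, (A i k : ℝ) * x k = (b i : ℝ) →
      (∑ k, A i k * c k i₀ = b i ∧ ∀ t ∈ T, ∑ k, A i k * c k t = 0) := by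
    intro i hi
    have hrepr : (∑ k, A i k • c k) = Finsupp.single i₀ (b i) := by
      have h1 : B.repr (∑ k, (A i k : ℝ) * x k) = ∑ k, A i k • c k := by
        rw [map_sum]
        refine Finset.sum_congr rfl fun k _ => ?_
        rw [← Rat.smul_def, map_smul]
      have h2 : B.repr ((b i : ℝ)) = Finsupp.single i₀ (b i) := by
        have : (b i : ℝ) = b i • B i₀ := by rw [hBself]; simp [i₀, Rat.smul_def]
        rw [this, map_smul, B.repr_self, Finsupp.smul_single, smul_eq_mul, mul_one]
      rw [← h1, ← h2, hi]
    constructor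
    · have := DFunLike.congr_fun hrepr i₀
      simpa [Finsupp.finset_sum_apply, Finsupp.smul_apply, smul_eq_mul] using this
    · intro t ht
      have := DFunLike.congr_fun hrepr t
      have hne : t ≠ i₀ := Finset.ne_of_mem_erase ht
      rw [Finsupp.single_eq_of_ne' (show i₀ ≠ t from fun h => hne h.symm)] at this
      simpa [Finsupp.finset_sum_apply, Finsupp.smul_apply, smul_eq_mul] using this
  -- the affine maps in the perturbation variables
  let F : Fin m → ((↑T : Type _) → ℝ) → ℝ := fun i u =>
    ∑ k, (A i k : ℝ) * ((c k i₀ : ℝ) + ∑ t ∈ T.attach, (c k t : ℝ) * u t)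
  have hFcont : ∀ i, Continuous (F i) := by
    intro i
    apply continuous_finset_sum
    intro k _
    exact continuous_const.mul (continuous_const.add (continuous_finset_sum _
      fun t _ => continuous_const.mul (continuous_apply t)))
  let ustar : (↑T : Type _) → ℝ := fun t => ((t : ι) : ℝ)
  have hFstar : ∀ i, F i ustar = ∑ k, (A i k : ℝ) * x k := by
    intro i
    refine Finset.sum_congr rfl fun k _ => ?_
    rw [hx_expand k, ← Finset.sum_attach T fun t => (c k t : ℝ) * (t : ℝ)]
  -- the open set of perturbations keeping strict constraints strict
  let U : Set ((↑T : Type _) → ℝ) :=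
    {u | ∀ i, (∑ k, (A i k : ℝ) * x k < (b i : ℝ)) → F i u < (b i : ℝ)}
  have hUopen : IsOpen U := by
    have : U = ⋂ i, {u | (∑ k, (A i k : ℝ) * x k < (b i : ℝ)) → F i u < (b i : ℝ)} := by
      ext u; simp [U, Set.mem_iInter]
    rw [this]
    refine isOpen_iInter_of_finite fun i => ?_
    by_cases hP : ∑ k, (A i k : ℝ) * x k < (b i : ℝ)
    · have : {u : (↑T : Type _) → ℝ | (∑ k, (A i k : ℝ) * x k < (b i : ℝ)) → F i u < (b i : ℝ)}
          = F i ⁻¹' Set.Iio (b i : ℝ) := by ext u; simp [hP]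
      rw [this]; exact isOpen_Iio.preimage (hFcont i)
    · have : {u : (↑T : Type _) → ℝ | (∑ k, (A i k : ℝ) * x k < (b i : ℝ)) → F i u < (b i : ℝ)}
          = Set.univ := by ext u; simp [hP]
      rw [this]; exact isOpen_univ
  have hustar : ustar ∈ U := by
    intro i hi
    rw [hFstar]; exact hi
  -- density of rational perturbations
  have hdense : Dense (Set.pi Set.univ fun _ : (↑T : Type _) => Set.range ((↑) : ℚ → ℝ)) :=
    dense_pi _ fun _ _ => Rat.denseRange_cast
  obtain ⟨u, huU, huD⟩ := hdense.inter_open_nonempty U hUopen ⟨ustar, hustar⟩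
  choose v hv using fun t => huD t (Set.mem_univ t)
  -- the rational solution
  refine ⟨fun k => c k i₀ + ∑ t ∈ T.attach, c k t * v t, fun i => ?_⟩
  have hcast : ((∑ k, A i k * (c k i₀ + ∑ t ∈ T.attach, c k t * v t) : ℚ) : ℝ) = F i u := by
    push_cast
    refine Finset.sum_congr rfl fun k _ => ?_
    congr 1
    refine congrArg _ (Finset.sum_congr rfl fun t _ => ?_)
    rw [hv t]
  rcases eq_or_lt_of_le (hx i) with heq | hlt
  · -- tight constraint: exact rational equality
    obtain ⟨h0, hT⟩ := key i heq
    have : ∑ k, A i k * (c k i₀ + ∑ t ∈ T.attach, c k t * v t)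
        = (∑ k, A i k * c k i₀) + ∑ t ∈ T.attach, (∑ k, A i k * c k t) * v t := by
      simp only [mul_add, Finset.sum_add_distrib, Finset.mul_sum]
      congr 1
      rw [Finset.sum_comm]
      refine Finset.sum_congr rfl fun t _ => ?_
      rw [Finset.sum_mul]
      exact Finset.sum_congr rfl fun k _ => (mul_assoc _ _ _).symm
    rw [this, h0]
    have : ∑ t ∈ T.attach, (∑ k, A i k * c k t) * v t = 0 := by
      refine Finset.sum_eq_zero fun t _ => ?_
      rw [hT t t.2, zero_mul]
    rw [this, add_zero]
  · -- strict constraint: preserved by the rational perturbation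
    have := huU i hlt
    rw [← hcast] at this
    exact_mod_cast this.le
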